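/- For every right-infinite binary word x, the word 00μ(1μ(x)) is 7/3-power-free if and only if 0μ(1μ(x)) is 7/3-power-free. -/

import Mathlib

/-- Thue–Morse morphism on finite binary words: 0 ↦ 01, 1 ↦ 10 (0 = false, 1 = true). -/
def mu (w : List Bool) : List Bool := w.flatMap (fun b => [b, !b])

/-- Thue–Morse morphism on right-infinite binary words. -/
def muI (x : ℕ → Bool) : ℕ → Bool := fun n => if n % 2 = 0 then x (n / 2) else !(x (n / 2))

/-- Prepend a finite word to an infinite word. -/
def appendInf (u : List Bool) (x : ℕ → Bool) : ℕ → Bool :=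
  fun n => if h : n < u.length then u.get ⟨n, h⟩ else x (n - u.length)

/-- `w` is a prefix of the infinite word `x`. -/
def InfPrefix (w : List Bool) (x : ℕ → Bool) : Prop :=
  ∀ i (h : i < w.length), w.get ⟨i, h⟩ = x i

/-- The finite word `w` is `p`-periodic. -/
def ListPeriodic (w : List Bool) (p : ℕ) : Prop :=
  ∀ i, i + p < w.length → w.getD i false = w.getD (i + p) false

/-- `w` occurs as a factor of the infinite word `x`. -/
def IsFactor (x : ℕ → Bool) (w : List Bool) : Prop :=
  ∃ i, ∀ k (h : k < w.length), w.get ⟨k, h⟩ = x (i + k)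

/-- `w` has exponent ≥ β : it has a period `p ≥ 1` with `|w| ≥ β·p`. -/
def HasExpGE (w : List Bool) (β : ℚ) : Prop :=
  ∃ p, 1 ≤ p ∧ ListPeriodic w p ∧ β * p ≤ (w.length : ℚ)

/-- `w` has exponent > β. -/
def HasExpGT (w : List Bool) (β : ℚ) : Prop :=
  ∃ p, 1 ≤ p ∧ ListPeriodic w p ∧ β * p < (w.length : ℚ)

/-- The infinite word `x` is β-power-free: no factor has exponent ≥ β. -/
def FreeI (x : ℕ → Bool) (β : ℚ) : Prop := ∀ w, IsFactor x w → ¬ HasExpGE w β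

/-- The infinite word `x` is β⁺-power-free: no factor has exponent > β. -/
def FreePlusI (x : ℕ → Bool) (β : ℚ) : Prop := ∀ w, IsFactor x w → ¬ HasExpGT w β

/-- The finite word `x` is β-power-free. -/
def FreeL (x : List Bool) (β : ℚ) : Prop := ∀ w, w <:+: x → ¬ HasExpGE w β

/-- The finite word `x` is β⁺-power-free. -/
def FreeLPlus (x : List Bool) (β : ℚ) : Prop := ∀ w, w <:+: x → ¬ HasExpGT w β

/-- The infinite word `x` is 7/3-power-free. -/
def Free73 (x : ℕ → Bool) : Prop := FreeI x (7/3)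

/-- The prefix of length `n` of the infinite word `x` is `p`-periodic. -/
def PrefPeriodic (x : ℕ → Bool) (p n : ℕ) : Prop := ∀ i, i + p < n → x i = x (i + p)

/-- The set {ε, 0, 00, 1, 11}. -/
def P5 : Set (List Bool) :=
  {[], [false], [false, false], [true], [true, true]}

/-- Thue–Morse word: parity of the number of ones in base 2. -/
def tmWord (n : ℕ) : Bool := (Nat.digits 2 n).sum % 2 == 1

/-- Lexicographic order (0 < 1) on infinite binary words. -/
def LexLE (u v : ℕ → Bool) : Prop :=
  u = v ∨ ∃ n, (∀ k < n, u k = v k) ∧ u n = false ∧ v n = true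

/-- The 2-kernel of an infinite word. -/
def Kernel2 (x : ℕ → Bool) : Set (ℕ → Bool) :=
  {y | ∃ i j, j < 2 ^ i ∧ y = fun n => x (2 ^ i * n + j)}

/-- An infinite word is 2-automatic iff its 2-kernel is finite. -/
def TwoAutomatic (x : ℕ → Bool) : Prop := (Kernel2 x).Finite

section Aux11

variable (x : ℕ → Bool)

/-- `z = 1 μ(x)` -/
private def zW (x : ℕ → Bool) : ℕ → Bool := appendInf [true] (muI x)
/-- `y = μ(z)` -/
private def yW (x : ℕ → Bool) : ℕ → Bool := muI (zW x)
/-- `u = 0 y` -/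
private def uW (x : ℕ → Bool) : ℕ → Bool := appendInf [false] (yW x)
/-- `v = 0 0 y` -/
private def vW (x : ℕ → Bool) : ℕ → Bool := appendInf [false, false] (yW x)

private lemma muI_even (w : ℕ → Bool) (i : ℕ) : muI w (2 * i) = w i := by
  unfold muI
  rw [if_pos (by omega)]
  congr 1
  omega

private lemma muI_odd (w : ℕ → Bool) (i : ℕ) : muI w (2 * i + 1) = !(w i) := by
  unfold muI
  rw [if_neg (by omega)]
  congr 2
  omega

private lemma zW_zero : zW x 0 = true := rfl

private lemma zW_succ (k : ℕ) : zW x (k + 1) = muI x k := by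
  simp [zW, appendInf]

private lemma yW_even (i : ℕ) : yW x (2 * i) = zW x i := muI_even _ i

private lemma yW_odd (i : ℕ) : yW x (2 * i + 1) = !(zW x i) := muI_odd _ i

private lemma vW_zero : vW x 0 = false := rfl

private lemma vW_one : vW x 1 = false := rfl

private lemma vW_succ2 (k : ℕ) : vW x (k + 2) = yW x k := by
  simp [vW, appendInf]

private lemma uW_zero : uW x 0 = false := rfl

private lemma uW_succ (k : ℕ) : uW x (k + 1) = yW x k := by
  simp [uW, appendInf]

private lemma vW_eq_uW (k : ℕ) : vW x (k + 1) = uW x k := by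
  cases k with
  | zero => rfl
  | succ m => rw [vW_succ2, uW_succ]

/-- `z` has no three consecutive equal letters. -/
private lemma zW_no3 (k : ℕ) :
    zW x k ≠ zW x (k + 1) ∨ zW x (k + 1) ≠ zW x (k + 2) := by
  cases k with
  | zero =>
    right
    rw [zW_succ, zW_succ]
    have h1 : muI x 0 = x 0 := muI_even x 0
    have h2 : muI x 1 = !(x 0) := muI_odd x 0
    rw [h1, h2]
    cases x 0 <;> simp
  | succ m =>
    rcases Nat.even_or_odd m with ⟨j, hj⟩ | ⟨j, hj⟩
    · left
      rw [zW_succ, zW_succ]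
      have h1 : muI x m = x j := by rw [hj, show j + j = 2 * j by ring]; exact muI_even x j
      have h2 : muI x (m + 1) = !(x j) := by
        rw [hj, show j + j + 1 = 2 * j + 1 by ring]; exact muI_odd x j
      rw [h1, h2]
      cases x j <;> simp
    · right
      rw [zW_succ, zW_succ]
      have h1 : muI x (m + 1) = x (j + 1) := by
        rw [hj, show 2 * j + 1 + 1 = 2 * (j + 1) by ring]; exact muI_even x (j + 1)
      have h2 : muI x (m + 2) = !(x (j + 1)) := by
        rw [hj, show 2 * j + 1 + 2 = 2 * (j + 1) + 1 by ring]; exact muI_odd x (j + 1)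
      rw [h1, h2]
      cases x (j + 1) <;> simp

private lemma zW_one_ne_two : zW x 1 ≠ zW x 2 := by
  rw [zW_succ, zW_succ]
  have h1 : muI x 0 = x 0 := muI_even x 0
  have h2 : muI x 1 = !(x 0) := muI_odd x 0
  rw [h1, h2]
  cases x 0 <;> simp

/-- The combinatorial core: no prefix of `v = 00μ(1μ(x))` has a period `p`
with `7p ≤ 3n` while the suffix has `3(n-1) < 7p`. -/
private lemma noPrefixPower (p n : ℕ) (hp : 1 ≤ p)
    (h1 : 7 * p ≤ 3 * n) (h2 : 3 * (n - 1) < 7 * p)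
    (hP : ∀ i, i + p < n → vW x i = vW x (i + p)) : False := by
  have hn3 : 3 ≤ n := by omega
  rcases Nat.even_or_odd p with ⟨q, hq⟩ | ⟨h, hh⟩
  · -- p even, p = 2r + 2
    have hq1 : 1 ≤ q := by omega
    obtain ⟨r, hr⟩ : ∃ r, p = 2 * r + 2 := ⟨q - 1, by omega⟩
    have hpn : p + 1 < n := by omega
    have e0 := hP 0 (by omega)
    have e1 := hP 1 (by omega)
    rw [vW_zero] at e0
    rw [vW_one] at e1
    rw [show 0 + p = 2 * r + 2 by omega, vW_succ2, yW_even] at e0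
    rw [show 1 + p = (2 * r + 1) + 2 by omega, vW_succ2, yW_odd] at e1
    cases hzr : zW x r <;> rw [hzr] at e0 e1
    · exact absurd e1 (by simp)
    · exact absurd e0 (by simp)
  · -- p odd, p = 2h + 1
    match h, hh with
    | 0, hh =>
      -- p = 1
      have e1 := hP 1 (by omega)
      rw [vW_one, show 1 + p = 0 + 2 by omega, vW_succ2,
        show (0 : ℕ) = 2 * 0 by rfl, yW_even, zW_zero] at e1
      exact absurd e1 (by simp)
    | 1, hh =>
      -- p = 3, n = 7
      have hn7 : n = 7 := by omega
      have e1 := hP 1 (by omega)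
      have e3 := hP 3 (by omega)
      rw [vW_one, show 1 + p = 2 + 2 by omega, vW_succ2,
        show (2 : ℕ) = 2 * 1 by rfl, yW_even] at e1
      rw [show (3 : ℕ) = 1 + 2 by rfl, vW_succ2, show (1 : ℕ) = 2 * 0 + 1 by rfl, yW_odd,
        zW_zero, show 2 * 0 + 1 + 2 + p = 4 + 2 by omega, vW_succ2,
        show (4 : ℕ) = 2 * 2 by rfl, yW_even] at e3
      have := zW_one_ne_two x
      rw [← e1, ← e3] at this
      simp at this
    | (h + 2), hh =>
      -- p = 2h' + 1 with h' = h + 2 ≥ 2, so p ≥ 5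
      have hpn : p + 5 < n := by omega
      have e2 := hP 2 (by omega)
      have e3 := hP 3 (by omega)
      have e4 := hP 4 (by omega)
      have e5 := hP 5 (by omega)
      rw [show (2 : ℕ) = 0 + 2 by rfl, vW_succ2, show (0 : ℕ) = 2 * 0 by rfl, yW_even,
        zW_zero, show 2 * 0 + 2 + p = (2 * (h + 2) + 1) + 2 by omega, vW_succ2, yW_odd] at e2
      rw [show (3 : ℕ) = 1 + 2 by rfl, vW_succ2, show (1 : ℕ) = 2 * 0 + 1 by rfl, yW_odd,
        zW_zero, show 2 * 0 + 1 + 2 + p = (2 * (h + 3)) + 2 by omega, vW_succ2, yW_even] at e3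
      rw [show (4 : ℕ) = 2 + 2 by rfl, vW_succ2, show (2 : ℕ) = 2 * 1 by rfl, yW_even,
        show 2 * 1 + 2 + p = (2 * (h + 3) + 1) + 2 by omega, vW_succ2, yW_odd] at e4
      rw [show (5 : ℕ) = 3 + 2 by rfl, vW_succ2, show (3 : ℕ) = 2 * 1 + 1 by rfl, yW_odd,
        show 2 * 1 + 1 + 2 + p = (2 * (h + 4)) + 2 by omega, vW_succ2, yW_even] at e5
      -- e2 : true = !zW x (h+2), e3 : !true = zW x (h+3),
      -- e4 : zW x 1 = !zW x (h+3), e5 : !zW x 1 = zW x (h+4)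
      have h3 := zW_no3 x (h + 2)
      rw [show h + 2 + 1 = h + 3 by omega, show h + 2 + 2 = h + 4 by omega] at h3
      have a2 : zW x (h + 2) = false := by simpa using e2.symm
      have a3 : zW x (h + 3) = false := by simpa using e3.symm
      rw [a3] at e4
      simp only [Bool.not_false] at e4
      rw [e4] at e5
      have a4 : zW x (h + 4) = false := by simpa using e5.symm
      rcases h3 with h3 | h3
      · rw [a2, a3] at h3; exact h3 rfl
      · rw [a3, a4] at h3; exact h3 rfl

end Aux11

theorem stmt11 (x : ℕ → Bool) :
    Free73 (appendInf [false, false] (muI (appendInf [true] (muI x)))) ↔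
    Free73 (appendInf [false] (muI (appendInf [true] (muI x)))) := by
  show Free73 (vW x) ↔ Free73 (uW x)
  constructor
  · -- easy direction: u is (a shift of) a suffix of v
    intro hv w ⟨i, hw⟩ hexp
    refine hv w ⟨i + 1, fun k hk => ?_⟩ hexp
    rw [hw k hk, show i + 1 + k = (i + k) + 1 by omega, vW_eq_uW]
  · -- hard direction
    intro hu w ⟨i, hw⟩ hexp
    obtain ⟨p, hp, hper, hlen⟩ := hexp
    set n := w.length with hn
    cases i with
    | succ j =>
      refine hu w ⟨j, fun k hk => ?_⟩ ⟨p, hp, hper, hlen⟩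
      rw [hw k hk, show j + 1 + k = (j + k) + 1 by omega, vW_eq_uW]
    | zero =>
      have h1 : 7 * p ≤ 3 * n := by
        have : (7 * p : ℚ) ≤ 3 * n := by
          have := hlen
          push_cast at this ⊢
          linarith
        exact_mod_cast this
      have hn3 : 3 ≤ n := by omega
      have hP : ∀ i, i + p < n → vW x i = vW x (i + p) := by
        intro i hi
        have hi1 : i < n := by omega
        have := hper i hi
        rw [List.getD_eq_get w _ ⟨i, hi1⟩, List.getD_eq_get w _ ⟨i + p, hi⟩] at this
        have hwi := hw i hi1
        have hwip := hw (i + p) hi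
        rw [zero_add] at hwi hwip
        rw [← hwi, ← hwip]
        exact this
      -- the suffix of length n - 1 is a factor of u with period p
      set t : List Bool := List.ofFn (fun k : Fin (n - 1) => uW x k) with ht
      have htlen : t.length = n - 1 := by simp [ht]
      have htget : ∀ k (h : k < t.length), t.get ⟨k, h⟩ = uW x k := by
        intro k h
        simp [ht, List.get_ofFn]
      have htfac : IsFactor (uW x) t := by
        refine ⟨0, fun k h => ?_⟩
        rw [htget k h, zero_add]
      have htper : ListPeriodic t p := by
        intro i hi
        rw [htlen] at hi
        have hi1 : i < t.length := by omega
        have hi2 : i + p < t.length := by omega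
        rw [List.getD_eq_get t _ ⟨i, hi1⟩, List.getD_eq_get t _ ⟨i + p, hi2⟩, htget i hi1, htget (i + p) hi2]
        rw [← vW_eq_uW, ← vW_eq_uW, show i + p + 1 = (i + 1) + p by omega]
        exact hP (i + 1) (by omega)
      have h2 : 3 * (n - 1) < 7 * p := by
        have hno := hu t htfac
        have : ¬ ((7 : ℚ) / 3 * p ≤ (t.length : ℚ)) := fun hle => hno ⟨p, hp, htper, hle⟩
        rw [not_le, htlen] at this
        have hcast : ((n - 1 : ℕ) : ℚ) = (n : ℚ) - 1 := by
          rw [Nat.cast_sub (by omega)]; norm_num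
        rw [hcast] at this
        have : (3 * (n - 1 : ℕ) : ℚ) < 7 * p := by
          rw [hcast]; push_cast; linarith
        exact_mod_cast this
      exact noPrefixPower x p n hp h1 h2 hP
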